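/- Fix λ < 0 and t ∈ (0,1). Let (ℓ_n)_{n≥1} be nonnegative integers with ℓ_n ≡ n (mod 2) and ℓ_n/√n → |λ|, and set t_n := 2⌊tn/2⌋ + 1. Then, as n → ∞, n · (ℓ_n/(n − t_n)) · C(t_n, (t_n+1)/2) · C(n − t_n, (n − t_n + ℓ_n − 1)/2) / C(n, (n + ℓ_n)/2) converges to 2 f_{Z^λ}(t), i.e. to (2|λ| / √(2π t (1−t)³)) · exp(−λ² t / (2(1−t))). (The factor 2 is the lattice spacing of the possible values t_n; this is the local limit theorem identifying the limiting density of the first return time Z^λ as f_{Z^λ}.) -/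

import Mathlib

open Filter Real Finset

noncomputable def stirRatio (n : ℕ) : ℝ :=
  n.factorial / (Real.sqrt (2 * π * n) * ((n : ℝ) / Real.exp 1) ^ n)

theorem stirRatio_tendsto : Tendsto stirRatio atTop (nhds 1) := by
  have h := Stirling.tendsto_stirlingSeq_sqrt_pi
  have hπ : (0:ℝ) < π := Real.pi_pos
  have h2 : Tendsto (fun n => Stirling.stirlingSeq n / Real.sqrt π) atTop
      (nhds (Real.sqrt π / Real.sqrt π)) := h.div_const _
  rw [div_self (by positivity)] at h2
  refine h2.congr (fun n => ?_)
  unfold stirRatio Stirling.stirlingSeq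
  rw [div_div]
  congr 1
  rw [show (2 * π * n : ℝ) = π * (2 * n) by ring, Real.sqrt_mul hπ.le]
  ring


noncomputable def stirD (n : ℕ) : ℝ := Real.sqrt (2 * π * n) * ((n : ℝ) / Real.exp 1) ^ n

theorem stirD_pos {n : ℕ} (hn : 0 < n) : 0 < stirD n := by
  have : (0:ℝ) < n := by exact_mod_cast hn
  unfold stirD
  positivity

theorem fact_eq {n : ℕ} (hn : 0 < n) : (n.factorial : ℝ) = stirRatio n * stirD n := by
  unfold stirRatio stirD
  field_simp [ne_of_gt (stirD_pos hn), stirD]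

theorem binom_decomp {m p q : ℕ} (hp : 0 < p) (hq : 0 < q) (hpq : p + q = m) :
    (Nat.choose m p : ℝ) =
      (stirRatio m / (stirRatio p * stirRatio q)) * (stirD m / (stirD p * stirD q)) := by
  have hpm : p ≤ m := by omega
  have hkey := Nat.choose_mul_factorial_mul_factorial hpm
  have hq' : m - p = q := by omega
  rw [hq'] at hkey
  have hkeyR : (Nat.choose m p : ℝ) * p.factorial * q.factorial = m.factorial := by
    exact_mod_cast congrArg (Nat.cast : ℕ → ℝ) hkey
  have hm : 0 < m := by omega
  have hfp : (0:ℝ) < p.factorial := by exact_mod_cast p.factorial_pos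
  have hfq : (0:ℝ) < q.factorial := by exact_mod_cast q.factorial_pos
  have hrp : stirRatio p ≠ 0 := by
    unfold stirRatio; exact div_ne_zero (ne_of_gt hfp) (ne_of_gt (stirD_pos hp))
  have hrq : stirRatio q ≠ 0 := by
    unfold stirRatio; exact div_ne_zero (ne_of_gt hfq) (ne_of_gt (stirD_pos hq))
  have e1 := fact_eq hm
  have e2 := fact_eq hp
  have e3 := fact_eq hq
  rw [e2, e3, e1] at hkeyR
  have hDp := stirD_pos hp
  have hDq := stirD_pos hq
  field_simp at hkeyR ⊢
  nlinarith [hkeyR]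


theorem pow_eq_exp {n : ℕ} (hn : 0 < n) :
    ((n:ℝ) / Real.exp 1) ^ n = Real.exp ((n:ℝ) * (Real.log n - 1)) := by
  have h1 : (0:ℝ) < (n:ℝ) / Real.exp 1 := by positivity
  rw [← Real.exp_log h1, ← Real.exp_nat_mul, Real.log_div (by exact_mod_cast hn.ne')
    (Real.exp_ne_zero 1), Real.log_exp]

theorem two_pow_eq_exp (n : ℕ) : (2:ℝ) ^ n = Real.exp ((n:ℝ) * Real.log 2) := by
  rw [← Real.exp_log (by norm_num : (0:ℝ) < 2), ← Real.exp_nat_mul, Real.log_exp]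

theorem stirD_ratio {m p q : ℕ} (hp : 0 < p) (hq : 0 < q) (hpq : p + q = m) :
    Real.sqrt m * (stirD m / (stirD p * stirD q)) / 2 ^ m =
      Real.sqrt ((m:ℝ)^2 / (2 * π * p * q)) *
        Real.exp ((m:ℝ) * Real.log m - (p:ℝ) * Real.log p - (q:ℝ) * Real.log q
          - (m:ℝ) * Real.log 2) := by
  have hm : 0 < m := by omega
  have hmR : (0:ℝ) < m := by exact_mod_cast hm
  have hpR : (0:ℝ) < p := by exact_mod_cast hp
  have hqR : (0:ℝ) < q := by exact_mod_cast hq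
  have hpqR : (p:ℝ) + q = m := by exact_mod_cast hpq
  have hπ := Real.pi_pos
  unfold stirD
  rw [pow_eq_exp hm, pow_eq_exp hp, pow_eq_exp hq, two_pow_eq_exp m]
  have hsq : Real.sqrt (m:ℝ) * Real.sqrt (2*π*m) / (Real.sqrt (2*π*p) * Real.sqrt (2*π*q))
      = Real.sqrt ((m:ℝ)^2 / (2 * π * p * q)) := by
    rw [← Real.sqrt_mul (by positivity), ← Real.sqrt_mul (by positivity),
      ← Real.sqrt_div (by positivity)]
    congr 1
    field_simp
  have hexp : Real.exp ((m:ℝ) * (Real.log m - 1)) /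
      (Real.exp ((p:ℝ) * (Real.log p - 1)) * Real.exp ((q:ℝ) * (Real.log q - 1)) *
        Real.exp ((m:ℝ) * Real.log 2))
      = Real.exp ((m:ℝ) * Real.log m - (p:ℝ) * Real.log p - (q:ℝ) * Real.log q
          - (m:ℝ) * Real.log 2) := by
    rw [← Real.exp_add, ← Real.exp_add, ← Real.exp_sub]
    congr 1
    nlinarith [hpqR]
  rw [← hsq, ← hexp]
  have e1 := Real.exp_pos ((p:ℝ) * (Real.log p - 1))
  have e2 := Real.exp_pos ((q:ℝ) * (Real.log q - 1))
  have e3 := Real.exp_pos ((m:ℝ) * Real.log 2)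
  have s1 : (0:ℝ) < Real.sqrt (2*π*p) := Real.sqrt_pos.mpr (by positivity)
  have s2 : (0:ℝ) < Real.sqrt (2*π*q) := Real.sqrt_pos.mpr (by positivity)
  field_simp

theorem log_taylor2 {x : ℝ} (h : |x| ≤ 1/2) :
    |Real.log (1 - x) + (x + x^2/2)| ≤ 2 * |x|^3 := by
  have h1 : |x| < 1 := lt_of_le_of_lt h (by norm_num)
  have := Real.abs_log_sub_add_sum_range_le h1 2
  have hs : (∑ i ∈ Finset.range 2, x ^ (i + 1) / (i + 1)) = x + x^2/2 := by
    simp [Finset.sum_range_succ]; ring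
  rw [hs] at this
  calc |Real.log (1 - x) + (x + x^2/2)| = |(x + x^2/2) + Real.log (1-x)| := by rw [add_comm]
    _ ≤ |x|^3 / (1 - |x|) := this
    _ ≤ 2 * |x|^3 := by
        rw [div_le_iff₀ (by linarith)]
        nlinarith [abs_nonneg x, pow_nonneg (abs_nonneg x) 3]

/-- `H x = (1+x) log (1+x) + (1-x) log (1-x)` is `x² + O(x³)`. -/
theorem H_bound {x : ℝ} (h : |x| ≤ 1/2) :
    |((1+x) * Real.log (1+x) + (1-x) * Real.log (1-x)) - x^2| ≤ 6 * |x|^3 := by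
  have hx1 : |x| ≤ 1/2 := h
  have hxneg : |(-x)| ≤ 1/2 := by rwa [abs_neg]
  have e₁ := log_taylor2 hx1
  have e₂ := log_taylor2 hxneg
  -- log(1+x) = log(1 - (-x))
  set a := Real.log (1 - x) + (x + x^2/2) with ha
  set b := Real.log (1 + x) + (-x + x^2/2) with hb
  have hb' : Real.log (1 - (-x)) + ((-x) + (-x)^2/2) = b := by rw [hb]; ring_nf
  rw [hb'] at e₂
  rw [abs_neg] at e₂
  have habs : ((1+x) * Real.log (1+x) + (1-x) * Real.log (1-x)) - x^2
      = (1+x) * b + (1-x) * a - (x^3/2 - x^3/2) := by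
    rw [ha, hb]; ring
  rw [habs]
  have h1x : |1 + x| ≤ 3/2 := by
    rw [abs_le] at hx1 ⊢; constructor <;> linarith [hx1.1, hx1.2]
  have h2x : |1 - x| ≤ 3/2 := by
    rw [abs_le] at hx1 ⊢; constructor <;> linarith [hx1.1, hx1.2]
  calc |(1+x) * b + (1-x) * a - (x^3/2 - x^3/2)| = |(1+x) * b + (1-x) * a| := by ring_nf
    _ ≤ |(1+x) * b| + |(1-x) * a| := abs_add_le _ _
    _ = |1+x| * |b| + |1-x| * |a| := by rw [abs_mul, abs_mul]
    _ ≤ (3/2) * (2 * |x|^3) + (3/2) * (2 * |x|^3) := by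
        have hbn := abs_nonneg b
        have han := abs_nonneg a
        nlinarith [mul_le_mul h1x e₂ (abs_nonneg b) (by norm_num : (0:ℝ) ≤ 3/2),
          mul_le_mul h2x e₁ (abs_nonneg a) (by norm_num : (0:ℝ) ≤ 3/2)]
    _ = 6 * |x|^3 := by ring

theorem E_eq {M J : ℝ} (hM : 0 < M) (hJ : 0 ≤ J) (hlt : J < M) :
    M * Real.log M - ((M+J)/2) * Real.log ((M+J)/2) - ((M-J)/2) * Real.log ((M-J)/2)
      - M * Real.log 2
    = -(M/2) * ((1 + J/M) * Real.log (1 + J/M) + (1 - J/M) * Real.log (1 - J/M)) := by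
  set x := J / M with hx
  have hx0 : 0 ≤ x := div_nonneg hJ hM.le
  have hx1 : x < 1 := (div_lt_one hM).mpr hlt
  have h1 : (M+J)/2 = (M/2) * (1+x) := by rw [hx]; field_simp
  have h2 : (M-J)/2 = (M/2) * (1-x) := by rw [hx]; field_simp
  have hM2 : (0:ℝ) < M/2 := by linarith
  rw [h1, h2, Real.log_mul hM2.ne' (by linarith : (1:ℝ)+x ≠ 0),
    Real.log_mul hM2.ne' (by linarith : (1:ℝ)-x ≠ 0),
    Real.log_div hM.ne' (by norm_num : (2:ℝ) ≠ 0)]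
  ring
set_option maxHeartbeats 2000000 in
theorem clt (m j : ℕ → ℕ) (v : ℝ)
    (hm : Tendsto m atTop atTop)
    (hpar : ∀ᶠ n in atTop, (m n + j n) % 2 = 0)
    (hv : Tendsto (fun n => (j n : ℝ)^2 / (m n)) atTop (nhds v)) :
    Tendsto (fun n => Real.sqrt (m n) * (Nat.choose (m n) ((m n + j n)/2) : ℝ) / 2 ^ (m n))
      atTop (nhds (Real.sqrt (2/π) * Real.exp (-v/2))) := by
  have hπ := Real.pi_pos
  set x : ℕ → ℝ := fun n => (j n : ℝ) / (m n) with hxdef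
  set p : ℕ → ℕ := fun n => (m n + j n) / 2 with hpdef
  set q : ℕ → ℕ := fun n => (m n - j n) / 2 with hqdef
  have hminv : Tendsto (fun n => ((m n : ℝ))⁻¹) atTop (nhds 0) :=
    (tendsto_natCast_atTop_atTop.comp hm).inv_tendsto_atTop
  have hx2 : Tendsto (fun n => x n ^ 2) atTop (nhds 0) := by
    have h := hv.mul hminv
    rw [mul_zero] at h
    refine h.congr fun n => ?_
    rcases eq_or_ne ((m n : ℝ)) 0 with h0 | h0
    · simp [hxdef, h0]
    · field_simp [hxdef]
      show (j n:ℝ)^2 = (m n:ℝ)^2 * ((j n:ℝ)/(m n))^2; field_simp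
  have hx0 : ∀ n, 0 ≤ x n := fun n => div_nonneg (Nat.cast_nonneg _) (Nat.cast_nonneg _)
  have hx : Tendsto x atTop (nhds 0) := by
    have h := (Real.continuous_sqrt.tendsto 0).comp hx2
    rw [Real.sqrt_zero] at h
    refine h.congr fun n => ?_
    exact Real.sqrt_sq (hx0 n)
  have evA : ∀ᶠ n in atTop, x n ≤ 1/2 :=
    (hx.eventually_lt_const (by norm_num : (0:ℝ) < 1/2)).mono fun n h => h.le
  have evM : ∀ᶠ n in atTop, 4 ≤ m n := hm.eventually_ge_atTop 4
  have ev2j : ∀ᶠ n in atTop, 2 * j n ≤ m n := by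
    filter_upwards [evA, evM] with n h1 h2
    have hm0 : (0:ℝ) < (m n : ℝ) := by exact_mod_cast (by omega : 0 < m n)
    have : (j n : ℝ) ≤ 1/2 * m n := (div_le_iff₀ hm0).mp h1
    have : ((2 * j n : ℕ) : ℝ) ≤ ((m n : ℕ) : ℝ) := by push_cast; linarith
    exact_mod_cast this
  -- the three convergent pieces
  have hp_top : Tendsto p atTop atTop := by
    rw [tendsto_atTop]
    intro b
    filter_upwards [hm.eventually_ge_atTop (2*b+2)] with n h1
    simp only [hpdef]
    omega
  have hq_top : Tendsto q atTop atTop := by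
    rw [tendsto_atTop]
    intro b
    filter_upwards [hm.eventually_ge_atTop (4*b+4), ev2j] with n h1 h2
    simp only [hqdef]
    omega
  have l1 : Tendsto (fun n => stirRatio (m n)) atTop (nhds 1) := stirRatio_tendsto.comp hm
  have l2 : Tendsto (fun n => stirRatio (p n)) atTop (nhds 1) := stirRatio_tendsto.comp hp_top
  have l3 : Tendsto (fun n => stirRatio (q n)) atTop (nhds 1) := stirRatio_tendsto.comp hq_top
  have hG1 : Tendsto (fun n => stirRatio (m n) / (stirRatio (p n) * stirRatio (q n)))
      atTop (nhds 1) := by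
    have h := l1.div (l2.mul l3) (by norm_num)
    have hval : (1:ℝ)/(1*1) = 1 := by norm_num
    rwa [hval] at h
  have hG2 : Tendsto (fun n => Real.sqrt (2 / (π * (1 - x n ^ 2)))) atTop
      (nhds (Real.sqrt (2/π))) := by
    have inner : Tendsto (fun n => 2 / (π * (1 - x n ^ 2))) atTop
        (nhds (2 / (π * (1 - 0)))) :=
      tendsto_const_nhds.div (tendsto_const_nhds.mul (tendsto_const_nhds.sub hx2))
        (by simp [hπ.ne'])
    have h := (Real.continuous_sqrt.tendsto _).comp inner
    have hval : 2/(π*(1-0)) = 2/π := by norm_num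
    rw [hval] at h
    exact h
  -- the exponential piece
  set R : ℕ → ℝ := fun n => -((m n : ℝ)/2) *
    (((1 + x n) * Real.log (1 + x n) + (1 - x n) * Real.log (1 - x n)) - x n ^ 2) with hRdef
  have hR : Tendsto R atTop (nhds 0) := by
    have hbound : ∀ᶠ n in atTop, ‖R n‖ ≤ 3 * ((j n : ℝ)^2 / m n) * x n := by
      filter_upwards [evA, evM] with n h1 h2
      have hm0 : (0:ℝ) < (m n : ℝ) := by exact_mod_cast (by omega : 0 < m n)
      have hxabs : |x n| ≤ 1/2 := by rw [abs_of_nonneg (hx0 n)]; exact h1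
      have hb := H_bound hxabs
      have hmx : (m n : ℝ) * x n ^ 2 = (j n : ℝ)^2 / m n := by
        rw [hxdef]; field_simp
      rw [hRdef]
      simp only [norm_mul, norm_neg, Real.norm_eq_abs]
      rw [abs_of_nonneg (by positivity : (0:ℝ) ≤ (m n : ℝ)/2)]
      calc (m n : ℝ)/2 * |((1 + x n) * Real.log (1 + x n) + (1 - x n) * Real.log (1 - x n)) - x n ^ 2|
          ≤ (m n : ℝ)/2 * (6 * |x n|^3) := by gcongr
        _ = 3 * ((m n : ℝ) * x n ^ 2) * x n := by
            rw [abs_of_nonneg (hx0 n)]; ring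
        _ = 3 * ((j n : ℝ)^2 / m n) * x n := by rw [hmx]
    have hg : Tendsto (fun n => 3 * ((j n : ℝ)^2 / m n) * x n) atTop (nhds 0) := by
      have h := (hv.const_mul 3).mul hx
      rw [mul_zero] at h
      exact h
    exact squeeze_zero_norm' hbound hg
  have hG3 : Tendsto (fun n => Real.exp (-((j n : ℝ)^2 / m n)/2 + R n)) atTop
      (nhds (Real.exp (-v/2))) := by
    have h : Tendsto (fun n => -((j n : ℝ)^2 / m n)/2 + R n) atTop (nhds (-v/2 + 0)) :=
      (hv.neg.div_const 2).add hR
    rw [add_zero] at h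
    exact (Real.continuous_exp.tendsto _).comp h
  -- combine
  have hΦ : Tendsto (fun n => (stirRatio (m n) / (stirRatio (p n) * stirRatio (q n))) *
      (Real.sqrt (2 / (π * (1 - x n ^ 2))) * Real.exp (-((j n : ℝ)^2 / m n)/2 + R n)))
      atTop (nhds (1 * (Real.sqrt (2/π) * Real.exp (-v/2)))) :=
    hG1.mul (hG2.mul hG3)
  rw [one_mul] at hΦ
  refine Tendsto.congr' ?_ hΦ
  -- eventual equality
  filter_upwards [evA, evM, ev2j, hpar] with n h1 h2 h3 h4
  have h2p : 2 * p n = m n + j n := by simp only [hpdef]; omega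
  have h2q : 2 * q n = m n - j n := by simp only [hqdef]; omega
  have hpq : p n + q n = m n := by omega
  have hppos : 0 < p n := by omega
  have hqpos : 0 < q n := by omega
  have hmpos : 0 < m n := by omega
  have hmR : (0:ℝ) < (m n : ℝ) := by exact_mod_cast hmpos
  have hjR : (0:ℝ) ≤ (j n : ℝ) := Nat.cast_nonneg _
  have hjlt : (j n : ℝ) < (m n : ℝ) := by exact_mod_cast (by omega : j n < m n)
  have hpR : (p n : ℝ) = ((m n : ℝ) + j n)/2 := by
    have : ((2 * p n : ℕ) : ℝ) = ((m n + j n : ℕ) : ℝ) := by exact_mod_cast h2p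
    push_cast at this
    linarith
  have hqR : (q n : ℝ) = ((m n : ℝ) - j n)/2 := by
    have : ((2 * q n : ℕ) : ℝ) = ((m n - j n : ℕ) : ℝ) := by exact_mod_cast h2q
    rw [Nat.cast_sub (by omega)] at this
    push_cast at this
    linarith
  -- rewrite the binomial
  rw [binom_decomp hppos hqpos hpq]
  have key := stirD_ratio hppos hqpos hpq
  have lhs_eq : Real.sqrt (m n) * ((stirRatio (m n) / (stirRatio (p n) * stirRatio (q n))) *
      (stirD (m n) / (stirD (p n) * stirD (q n)))) / 2 ^ (m n)
      = (stirRatio (m n) / (stirRatio (p n) * stirRatio (q n))) *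
        (Real.sqrt (m n) * (stirD (m n) / (stirD (p n) * stirD (q n))) / 2 ^ (m n)) := by
    ring
  rw [lhs_eq, key]
  -- identify sqrt part
  have hsqrt_eq : ((m n : ℝ))^2 / (2 * π * p n * q n) = 2 / (π * (1 - x n ^ 2)) := by
    have hpRpos : (0:ℝ) < (p n : ℝ) := by exact_mod_cast hppos
    have hqRpos : (0:ℝ) < (q n : ℝ) := by exact_mod_cast hqpos
    have hd1 : (0:ℝ) < 2 * π * (p n : ℝ) * (q n : ℝ) := by positivity
    have hxsq : x n ^ 2 ≤ 1/4 := by nlinarith [hx0 n, h1]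
    have hd2 : (0:ℝ) < π * (1 - x n ^ 2) := by nlinarith [hπ, hxsq]
    rw [div_eq_div_iff hd1.ne' hd2.ne']
    rw [hpR, hqR]
    simp only [hxdef]
    field_simp
    ring
  -- identify exp part
  have hexp_eq : (m n : ℝ) * Real.log (m n) - (p n : ℝ) * Real.log (p n)
      - (q n : ℝ) * Real.log (q n) - (m n : ℝ) * Real.log 2
      = -((j n : ℝ)^2 / m n)/2 + R n := by
    rw [hpR, hqR, E_eq hmR hjR hjlt, hRdef]
    have hmx : (m n : ℝ) * x n ^ 2 = (j n : ℝ)^2 / m n := by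
      rw [hxdef]; field_simp
    simp only [hxdef]
    rw [← hmx]
    ring
  rw [hsqrt_eq, hexp_eq]
set_option maxHeartbeats 3000000 in
/-- local limit theorem for the first return time of the discrete
Vervaat bridge. With `t_n = 2⌊tn/2⌋ + 1`,
`n · (ℓ_n/(n − t_n)) · C(t_n,(t_n+1)/2) · C(n−t_n,(n−t_n+ℓ_n−1)/2) / C(n,(n+ℓ_n)/2)`
converges to `2 f_{Z^λ}(t)`. -/
theorem local_limit_firstReturn (lam : ℝ) (hlam : lam < 0) (t : ℝ)
    (ht : t ∈ Set.Ioo (0 : ℝ) 1) (ℓ : ℕ → ℕ)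
    (hpar : ∀ n, ℓ n % 2 = n % 2)
    (hlim : Tendsto (fun n : ℕ => (ℓ n : ℝ) / Real.sqrt n) atTop (nhds |lam|)) :
    Tendsto
      (fun n : ℕ =>
        (n : ℝ) * ((ℓ n : ℝ) / ((n : ℝ) - (2 * ⌊t * n / 2⌋₊ + 1 : ℕ))) *
          (Nat.choose (2 * ⌊t * n / 2⌋₊ + 1) ((2 * ⌊t * n / 2⌋₊ + 1 + 1) / 2) : ℝ) *
          (Nat.choose (n - (2 * ⌊t * n / 2⌋₊ + 1))
            ((n - (2 * ⌊t * n / 2⌋₊ + 1) + ℓ n - 1) / 2) : ℝ) /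
          (Nat.choose n ((n + ℓ n) / 2) : ℝ))
      atTop
      (nhds (2 * (|lam| / Real.sqrt (2 * π * t * (1 - t) ^ 3) *
        Real.exp (-(lam ^ 2 * t) / (2 * (1 - t)))))) := by
  obtain ⟨ht0, ht1⟩ := ht
  have h1t : (0:ℝ) < 1 - t := by linarith
  have hπ := Real.pi_pos
  set k : ℕ → ℕ := fun n => 2 * ⌊t * n / 2⌋₊ + 1 with hkdef
  -- basic bounds on k
  have hkub : ∀ n : ℕ, (k n : ℝ) ≤ t * n + 1 := by
    intro n
    have h0 : (0:ℝ) ≤ t * n / 2 := by positivity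
    have := Nat.floor_le h0
    simp only [hkdef]
    push_cast
    linarith
  have hklb : ∀ n : ℕ, t * n - 1 < (k n : ℝ) := by
    intro n
    have := Nat.lt_floor_add_one (t * n / 2)
    simp only [hkdef]
    push_cast
    linarith
  have hNtop : Tendsto (fun n : ℕ => (n:ℝ)) atTop atTop := tendsto_natCast_atTop_atTop
  have hninv : Tendsto (fun n : ℕ => ((n:ℝ))⁻¹) atTop (nhds 0) := hNtop.inv_tendsto_atTop
  -- k → ∞
  have hlin1 : Tendsto (fun n : ℕ => t * n + (-1)) atTop atTop :=
    tendsto_atTop_add_const_right _ (-1) (hNtop.const_mul_atTop ht0)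
  have hk_top : Tendsto k atTop atTop := by
    rw [← tendsto_natCast_atTop_iff (R := ℝ)]
    exact tendsto_atTop_mono' _ (Eventually.of_forall fun n => by
      have := hklb n; linarith) hlin1
  -- eventually k n + 2 ≤ n
  have evK : ∀ᶠ n : ℕ in atTop, k n + 2 ≤ n := by
    have h3 : Tendsto (fun n : ℕ => (1 - t) * n) atTop atTop := hNtop.const_mul_atTop h1t
    filter_upwards [h3.eventually_ge_atTop 3] with n hn
    have h4 : (k n : ℝ) + 2 ≤ (n : ℝ) := by have := hkub n; linarith
    exact_mod_cast h4
  -- eventually ℓ n ≥ 1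
  have habs : (0:ℝ) < |lam| := abs_pos.mpr hlam.ne
  have evL : ∀ᶠ n : ℕ in atTop, 1 ≤ ℓ n := by
    filter_upwards [hlim.eventually (lt_mem_nhds (half_lt_self habs))] with n hn
    by_contra h
    have h0 : ℓ n = 0 := by omega
    rw [h0] at hn
    norm_num at hn
    linarith [half_pos habs]
  -- ℓ²/n → lam²
  have hvc : Tendsto (fun n : ℕ => ((ℓ n : ℝ))^2 / n) atTop (nhds (lam^2)) := by
    have h := hlim.mul hlim
    rw [← abs_mul, ← sq, abs_sq] at h
    refine h.congr fun n => ?_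
    rw [div_mul_div_comm, ← sq, ← sq, Real.sq_sqrt (Nat.cast_nonneg n)]
  -- eventually ℓ n ≤ n
  have evLn : ∀ᶠ n : ℕ in atTop, ℓ n ≤ n := by
    filter_upwards [hvc.eventually (eventually_lt_nhds (lt_add_one (lam^2))),
      hNtop.eventually_ge_atTop (lam^2 + 1), hNtop.eventually_ge_atTop 1] with n h1 h2 h3
    have hn0 : (0:ℝ) < n := by linarith
    have : ((ℓ n : ℝ))^2 < (lam^2 + 1) * n := by
      rw [div_lt_iff₀ hn0] at h1; linarith
    have h4 : ((ℓ n : ℝ))^2 < (n:ℝ) * n := by nlinarith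
    have h5 : (ℓ n : ℝ) ≤ n := by nlinarith [(by positivity : (0:ℝ) ≤ (ℓ n:ℝ))]
    exact_mod_cast h5
  -- k/n → t and (n-k)/n → 1-t
  have hkn : Tendsto (fun n : ℕ => (k n : ℝ) / n) atTop (nhds t) := by
    have hl : Tendsto (fun n : ℕ => t - ((n:ℝ))⁻¹) atTop (nhds (t - 0)) :=
      tendsto_const_nhds.sub hninv
    have hu : Tendsto (fun n : ℕ => t + ((n:ℝ))⁻¹) atTop (nhds (t + 0)) :=
      tendsto_const_nhds.add hninv
    rw [sub_zero] at hl; rw [add_zero] at hu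
    refine tendsto_of_tendsto_of_tendsto_of_le_of_le' hl hu ?_ ?_
    · filter_upwards [hNtop.eventually_ge_atTop 1] with n hn
      have hn0 : (0:ℝ) < n := by linarith
      rw [le_div_iff₀ hn0]
      have := hklb n
      have hinv : ((n:ℝ))⁻¹ * n = 1 := inv_mul_cancel₀ hn0.ne'
      nlinarith
    · filter_upwards [hNtop.eventually_ge_atTop 1] with n hn
      have hn0 : (0:ℝ) < n := by linarith
      rw [div_le_iff₀ hn0]
      have := hkub n
      have hinv : ((n:ℝ))⁻¹ * n = 1 := inv_mul_cancel₀ hn0.ne'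
      nlinarith
  have hfrac : Tendsto (fun n : ℕ => ((n - k n : ℕ) : ℝ) / n) atTop (nhds (1 - t)) := by
    have h := (tendsto_const_nhds (x := (1:ℝ))).sub hkn
    refine (h.congr' ?_)
    filter_upwards [evK, hNtop.eventually_ge_atTop 1] with n h1 h2
    have hn0 : (0:ℝ) < n := by linarith
    rw [Nat.cast_sub (by omega)]
    field_simp
  -- limits n/k and n/(n-k)
  have hnk : Tendsto (fun n : ℕ => (n:ℝ) / (k n : ℝ)) atTop (nhds t⁻¹) := by
    have h := hkn.inv₀ ht0.ne'
    refine h.congr fun n => ?_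
    rw [inv_div]
  have hnm : Tendsto (fun n : ℕ => (n:ℝ) / ((n - k n : ℕ) : ℝ)) atTop (nhds (1-t)⁻¹) := by
    have h := hfrac.inv₀ h1t.ne'
    refine h.congr fun n => ?_
    rw [inv_div]
  -- CLT applications
  have CA := clt k (fun _ => 1) 0 hk_top
    (Eventually.of_forall fun n => by simp only [hkdef]; omega)
    (by
      have h := ((tendsto_natCast_atTop_iff (R := ℝ)).mpr hk_top).inv_tendsto_atTop
      refine h.congr fun n => ?_
      norm_num)
  have CB : Tendsto (fun n => Real.sqrt ((n - k n : ℕ)) *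
      (Nat.choose (n - k n) (((n - k n) + (ℓ n - 1))/2) : ℝ) / 2 ^ (n - k n))
      atTop (nhds (Real.sqrt (2/π) * Real.exp (-(lam^2/(1-t))/2))) := by
    apply clt (fun n => n - k n) (fun n => ℓ n - 1) (lam^2/(1-t))
    · have hlin2 : Tendsto (fun n : ℕ => (1 - t) * n + (-1)) atTop atTop :=
        tendsto_atTop_add_const_right _ (-1) (hNtop.const_mul_atTop h1t)
      rw [← tendsto_natCast_atTop_iff (R := ℝ)]
      refine tendsto_atTop_mono' _ ?_ hlin2
      filter_upwards [evK] with n hn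
      show (1 - t) * (n:ℝ) + (-1) ≤ ((n - k n : ℕ) : ℝ)
      rw [Nat.cast_sub (by omega)]
      have := hkub n
      nlinarith
    · filter_upwards [evK, evL] with n h1 h2
      have hk2 : k n % 2 = 1 := by simp only [hkdef]; omega
      have := hpar n
      omega
    · have h1s : Tendsto (fun n : ℕ => 1 / Real.sqrt n) atTop (nhds 0) := by
        have h := (Real.continuous_sqrt.tendsto 0).comp hninv
        rw [Real.sqrt_zero] at h
        refine h.congr fun n => ?_
        simp [Real.sqrt_inv, one_div]
      have h1 : Tendsto (fun n : ℕ => ((ℓ n : ℝ) - 1) / Real.sqrt n) atTop (nhds |lam|) := by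
        have h := hlim.sub h1s
        rw [sub_zero] at h
        refine h.congr fun n => ?_
        rw [← sub_div]
      have h2 := h1.mul h1
      rw [← abs_mul, ← sq, abs_sq] at h2
      have h3 := h2.mul hnm
      refine h3.congr' ?_
      filter_upwards [evK, evL, hNtop.eventually_ge_atTop 1] with n e1 e2 e3
      have hn0 : (0:ℝ) < n := by linarith
      have hsq : Real.sqrt n ≠ 0 := by positivity
      have hmm : (0:ℝ) < ((n - k n : ℕ) : ℝ) := by
        have : 0 < n - k n := by omega
        exact_mod_cast this
      have hc : ((ℓ n - 1 : ℕ) : ℝ) = (ℓ n : ℝ) - 1 := by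
        rw [Nat.cast_sub e2]; norm_num
      rw [hc, div_mul_div_comm, ← sq, div_mul_div_comm,
        Real.mul_self_sqrt (by positivity : (0:ℝ) ≤ (n:ℝ))]
      rw [sq]
      field_simp
  have CC := clt (fun n => n) ℓ (lam^2) tendsto_id
    (Eventually.of_forall fun n => by show (n + ℓ n) % 2 = 0; have := hpar n; omega) hvc
  -- the explicit factor D
  have hD : Tendsto (fun n : ℕ => (ℓ n : ℝ) / Real.sqrt n * ((n:ℝ) / ((n - k n : ℕ) : ℝ)) *
      Real.sqrt ((n:ℝ) / (k n : ℝ)) * Real.sqrt ((n:ℝ) / ((n - k n : ℕ) : ℝ)))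
      atTop (nhds (|lam| * (1-t)⁻¹ * Real.sqrt t⁻¹ * Real.sqrt (1-t)⁻¹)) := by
    exact ((hlim.mul hnm).mul ((Real.continuous_sqrt.tendsto _).comp hnk)).mul
      ((Real.continuous_sqrt.tendsto _).comp hnm)
  -- the limit value equality
  have hsqX : (0:ℝ) < 2 * π * t * (1 - t) ^ 3 := by positivity
  have hexpq : Real.exp (-(lam^2/(1-t))/2) / Real.exp (-lam^2/2)
      = Real.exp (-(lam ^ 2 * t) / (2 * (1 - t))) := by
    rw [← Real.exp_sub]
    congr 1
    field_simp
    ring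
  have hsqrt4 : Real.sqrt 4 = 2 := by
    rw [show (4:ℝ) = 2^2 by norm_num, Real.sqrt_sq (by norm_num : (0:ℝ) ≤ 2)]
  have h2sq : Real.sqrt (((1-t)^2)⁻¹) = (1-t)⁻¹ := by
    rw [Real.sqrt_inv, Real.sqrt_sq h1t.le]
  have hsqcomb : Real.sqrt (2/π) * Real.sqrt t⁻¹ * Real.sqrt (1-t)⁻¹ * (1-t)⁻¹
      = 2 / Real.sqrt (2 * π * t * (1 - t) ^ 3) := by
    calc Real.sqrt (2/π) * Real.sqrt t⁻¹ * Real.sqrt (1-t)⁻¹ * (1-t)⁻¹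
        = Real.sqrt (2/π) * Real.sqrt t⁻¹ * Real.sqrt (1-t)⁻¹ *
          Real.sqrt (((1-t)^2)⁻¹) := by rw [h2sq]
      _ = Real.sqrt (2/π * t⁻¹ * (1-t)⁻¹ * ((1-t)^2)⁻¹) := by
          rw [← Real.sqrt_mul (by positivity), ← Real.sqrt_mul (by positivity),
            ← Real.sqrt_mul (by positivity)]
      _ = Real.sqrt (4 / (2 * π * t * (1 - t) ^ 3)) := by
          congr 1
          field_simp
          ring
      _ = 2 / Real.sqrt (2 * π * t * (1 - t) ^ 3) := by
          rw [Real.sqrt_div (by norm_num : (0:ℝ) ≤ 4), hsqrt4]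
  have hval : Real.sqrt (2/π) * Real.exp (-0/2) * (Real.sqrt (2/π) *
      Real.exp (-(lam^2/(1-t))/2)) / (Real.sqrt (2/π) * Real.exp (-lam^2/2)) *
      (|lam| * (1-t)⁻¹ * Real.sqrt t⁻¹ * Real.sqrt (1-t)⁻¹)
      = 2 * (|lam| / Real.sqrt (2 * π * t * (1 - t) ^ 3) *
        Real.exp (-(lam ^ 2 * t) / (2 * (1 - t)))) := by
    have hsq2 : Real.sqrt (2/π) ≠ 0 := by positivity
    have hE2 : Real.exp (-lam^2/2) ≠ 0 := Real.exp_ne_zero _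
    have he0 : Real.exp (-0/2 : ℝ) = 1 := by norm_num
    have step1 : Real.sqrt (2/π) * Real.exp (-0/2) * (Real.sqrt (2/π) *
        Real.exp (-(lam^2/(1-t))/2)) / (Real.sqrt (2/π) * Real.exp (-lam^2/2)) *
        (|lam| * (1-t)⁻¹ * Real.sqrt t⁻¹ * Real.sqrt (1-t)⁻¹)
        = Real.sqrt (2/π) * (Real.exp (-(lam^2/(1-t))/2) / Real.exp (-lam^2/2)) *
          (|lam| * (1-t)⁻¹ * Real.sqrt t⁻¹ * Real.sqrt (1-t)⁻¹) := by
      rw [he0, mul_one]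
      congr 1
      rw [mul_div_mul_left _ _ hsq2, mul_div_assoc]
    rw [step1, hexpq]
    calc Real.sqrt (2/π) * Real.exp (-(lam ^ 2 * t) / (2 * (1 - t))) *
        (|lam| * (1-t)⁻¹ * Real.sqrt t⁻¹ * Real.sqrt (1-t)⁻¹)
        = (Real.sqrt (2/π) * Real.sqrt t⁻¹ * Real.sqrt (1-t)⁻¹ * (1-t)⁻¹) *
          (|lam| * Real.exp (-(lam ^ 2 * t) / (2 * (1 - t)))) := by ring
      _ = 2 / Real.sqrt (2 * π * t * (1 - t) ^ 3) *
          (|lam| * Real.exp (-(lam ^ 2 * t) / (2 * (1 - t)))) := by rw [hsqcomb]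
      _ = 2 * (|lam| / Real.sqrt (2 * π * t * (1 - t) ^ 3) *
          Real.exp (-(lam ^ 2 * t) / (2 * (1 - t)))) := by ring
  -- combine all four
  have hALL := ((CA.mul CB).div CC (by positivity)).mul hD
  rw [hval] at hALL
  refine Tendsto.congr' ?_ hALL
  -- eventual equality
  filter_upwards [evK, evL, evLn, hNtop.eventually_ge_atTop 1] with n e1 e2 e3 e4
  have hn1 : 1 ≤ n := by exact_mod_cast e4
  have hkn' : k n ≤ n := by omega
  have hcastsub : ((n - k n : ℕ) : ℝ) = (n:ℝ) - (k n : ℝ) := by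
    rw [Nat.cast_sub hkn']
  have hidx : n - k n + ℓ n - 1 = (n - k n) + (ℓ n - 1) := by omega
  have hn0 : (0:ℝ) < n := by exact_mod_cast hn1
  have hk0 : (0:ℝ) < (k n : ℝ) := by
    have : 0 < k n := by simp only [hkdef]; omega
    exact_mod_cast this
  have hm0 : (0:ℝ) < ((n - k n : ℕ) : ℝ) := by
    have : 0 < n - k n := by omega
    exact_mod_cast this
  have hC0 : (0:ℝ) < (Nat.choose n ((n + ℓ n) / 2) : ℝ) := by
    have : (n + ℓ n) / 2 ≤ n := by omega
    exact_mod_cast Nat.choose_pos this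
  have hsqn : (0:ℝ) < Real.sqrt n := Real.sqrt_pos.mpr hn0
  have hsqk : (0:ℝ) < Real.sqrt (k n : ℝ) := Real.sqrt_pos.mpr hk0
  have hsqm : (0:ℝ) < Real.sqrt ((n - k n : ℕ) : ℝ) := Real.sqrt_pos.mpr hm0
  have hpow : (2:ℝ) ^ n = 2 ^ (k n) * 2 ^ (n - k n) := by
    rw [← pow_add]
    congr 1
    omega
  show Real.sqrt (k n) * (Nat.choose (k n) ((k n + 1)/2) : ℝ) / 2 ^ (k n) *
      (Real.sqrt ((n - k n : ℕ)) * (Nat.choose (n - k n) (((n - k n) + (ℓ n - 1))/2) : ℝ) /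
        2 ^ (n - k n)) /
      (Real.sqrt n * (Nat.choose n ((n + ℓ n)/2) : ℝ) / 2 ^ n) *
      ((ℓ n : ℝ) / Real.sqrt n * ((n:ℝ) / ((n - k n : ℕ) : ℝ)) *
        Real.sqrt ((n:ℝ)/(k n)) * Real.sqrt ((n:ℝ)/((n - k n : ℕ):ℝ)))
    = (n : ℝ) * ((ℓ n : ℝ) / ((n : ℝ) - (k n : ℕ))) * (Nat.choose (k n) ((k n + 1) / 2) : ℝ) *
      (Nat.choose (n - k n) ((n - k n + ℓ n - 1) / 2) : ℝ) / (Nat.choose n ((n + ℓ n) / 2) : ℝ)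
  rw [hidx, ← hcastsub, Real.sqrt_div hn0.le, Real.sqrt_div hn0.le, hpow]
  have h2k : (2:ℝ)^(k n) ≠ 0 := by positivity
  have h2m : (2:ℝ)^(n - k n) ≠ 0 := by positivity
  have hnk0 : (n:ℝ) - (k n : ℝ) ≠ 0 := by rw [← hcastsub]; exact hm0.ne'
  have hsqnk0 : Real.sqrt ((n:ℝ) - (k n : ℝ)) ≠ 0 := by
    rw [← hcastsub]; exact hsqm.ne'
  field_simp
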